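/- Elimination of the pressure gradient from the bottom pressure: if the horizontal momentum correction equation (hu − h̃u)/Δt = −(1/ρ)·(h̃·p)_x + (d_x/ρ)·[ 6/(4+d_x²)·p + d_x/(4+d_x²)·(h̃·p)_x + φ ] holds at a point x, then the bottom non-hydrostatic pressure P := 6/(4+d_x²)·p + d_x/(4+d_x²)·(h̃·p)_x + φ satisfies P = (3/2)·p + ((4+d_x²)/4)·φ − (ρ·d_x/(4·Δt))·(hu − h̃u) at that point. -/

import Mathlib

/-- Elimination of the pressure gradient from the bottom pressure: if the
horizontal momentum correction equation holds at a point `x`, then the bottom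
non-hydrostatic pressure
`P := 6/(4+d_x²)·p + d_x/(4+d_x²)·(h̃ p)_x + φ` satisfies
`P = (3/2) p + ((4+d_x²)/4) φ − (ρ d_x/(4 Δt)) (hu − h̃u)` at that point. -/
theorem bottom_pressure_elimination
    (ρ Δt : ℝ) (hρ : 0 < ρ) (hΔt : 0 < Δt)
    (d htil htu hu p φ : ℝ → ℝ)
    (hd : Differentiable ℝ d)
    (hhtil : Differentiable ℝ htil)
    (hhtu : Differentiable ℝ htu)
    (hhu : Differentiable ℝ hu)
    (hp : Differentiable ℝ p)
    (hφ : Differentiable ℝ φ)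
    (hpos : ∀ x, 0 < htil x)
    (x : ℝ)
    (hcorr : (hu x - htu x) / Δt
        = -(1 / ρ) * deriv (fun y => htil y * p y) x
          + (deriv d x / ρ) *
              (6 / (4 + (deriv d x) ^ 2) * p x
                + deriv d x / (4 + (deriv d x) ^ 2)
                    * deriv (fun y => htil y * p y) x
                + φ x)) :
    6 / (4 + (deriv d x) ^ 2) * p x
        + deriv d x / (4 + (deriv d x) ^ 2) * deriv (fun y => htil y * p y) x
        + φ x
      = (3 / 2) * p x + ((4 + (deriv d x) ^ 2) / 4) * φ x
          - (ρ * deriv d x / (4 * Δt)) * (hu x - htu x) := by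
  set a := deriv d x with ha
  set G := deriv (fun y => htil y * p y) x with hG
  have hden : (4 : ℝ) + a ^ 2 ≠ 0 := by positivity
  have hρ' : ρ ≠ 0 := ne_of_gt hρ
  have hΔt' : Δt ≠ 0 := ne_of_gt hΔt
  field_simp at hcorr ⊢
  have h2 : (hu x - htu x) * (ρ * (4 + a ^ 2))
      = (-(G * (4 + a ^ 2)) + a * (6 * p x + a * G + φ x * (4 + a ^ 2))) * Δt := by
    apply mul_left_cancel₀ hρ'
    linear_combination ρ * hcorr
  linear_combination (2*a) * h2
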